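/- Let 𝒢 be a linear r-graph whose bowtie graph B contains a path on p ≥ k² vertices. Then 𝒢 contains k hyperedges spanning at most (r-2)k + 3 vertices. -/

import Mathlib

open scoped Classical

/-- A hypergraph (finite set of hyperedges) is linear if any two distinct
hyperedges share at most one vertex. -/
def Linear {V : Type*} [DecidableEq V] (𝒢 : Finset (Finset V)) : Prop :=
  ∀ S ∈ 𝒢, ∀ T ∈ 𝒢, S ≠ T → (S ∩ T).card ≤ 1

/-- A hypergraph is `r`-uniform if every hyperedge has exactly `r` vertices. -/
def Uniform {V : Type*} (r : ℕ) (𝒢 : Finset (Finset V)) : Prop :=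
  ∀ S ∈ 𝒢, S.card = r

/-- A bowtie of `𝒢` is an unordered pair `{S, T}` of distinct hyperedges of `𝒢`
intersecting in exactly one vertex. -/
def IsBowtie {V : Type*} [DecidableEq V] (𝒢 : Finset (Finset V))
    (b : Finset (Finset V)) : Prop :=
  ∃ S T : Finset V, S ∈ 𝒢 ∧ T ∈ 𝒢 ∧ S ≠ T ∧ (S ∩ T).card = 1 ∧ b = {S, T}

/-- The bowtie graph `B(𝒢)`: vertices are the bowties of `𝒢`; bowties
`b₁ = {S₁, T}` and `b₂ = {S₂, T}` are adjacent iff `|S₁ ∩ S₂| = 1` and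
`S₁ ∩ S₂ ∩ T = ∅`. -/
def bowtieGraph {V : Type*} [DecidableEq V] (𝒢 : Finset (Finset V)) :
    SimpleGraph {b : Finset (Finset V) // IsBowtie 𝒢 b} where
  Adj b₁ b₂ := b₁ ≠ b₂ ∧ ∃ S₁ S₂ T : Finset V,
      (b₁ : Finset (Finset V)) = {S₁, T} ∧ (b₂ : Finset (Finset V)) = {S₂, T} ∧
      (S₁ ∩ S₂).card = 1 ∧ S₁ ∩ S₂ ∩ T = ∅
  symm := ⟨by
    rintro b₁ b₂ ⟨hne, S₁, S₂, T, h₁, h₂, hc, he⟩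
    exact ⟨hne.symm, S₂, S₁, T, h₂, h₁, by rwa [Finset.inter_comm],
      by rwa [Finset.inter_comm S₂ S₁]⟩⟩
  loopless := ⟨by rintro b ⟨hne, -⟩; exact hne rfl⟩

-- auxiliary lemmas

lemma bowtie_card {V : Type*} [DecidableEq V] {𝒢 b : Finset (Finset V)}
    (h : IsBowtie 𝒢 b) : b.card = 2 := by
  obtain ⟨S, T, -, -, hST, -, rfl⟩ := h
  rw [Finset.card_insert_of_notMem (by simpa using hST), Finset.card_singleton]

lemma bowtie_mem {V : Type*} [DecidableEq V] {𝒢 b : Finset (Finset V)} {X : Finset V}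
    (h : IsBowtie 𝒢 b) (hX : X ∈ b) : X ∈ 𝒢 := by
  obtain ⟨S, T, hS, hT, -, -, rfl⟩ := h
  rcases Finset.mem_insert.mp hX with rfl | h'
  · exact hS
  · rw [Finset.mem_singleton] at h'; subst h'; exact hT

lemma bowtie_pair {V : Type*} [DecidableEq V] {𝒢 b : Finset (Finset V)} {X Y : Finset V}
    (h : IsBowtie 𝒢 b) (hX : X ∈ b) (hY : Y ∈ b) (hne : X ≠ Y) : (X ∩ Y).card = 1 := by
  obtain ⟨S, T, -, -, hST, hc, rfl⟩ := h
  simp only [Finset.mem_insert, Finset.mem_singleton] at hX hY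
  rcases hX with rfl | rfl <;> rcases hY with rfl | rfl
  · exact absurd rfl hne
  · exact hc
  · rw [Finset.inter_comm]; exact hc
  · exact absurd rfl hne

lemma nat_ivt (f : ℕ → ℕ) (k : ℕ) : ∀ b a : ℕ, a ≤ b → f a ≤ k → k ≤ f b →
    (∀ j, a ≤ j → j < b → f (j + 1) ≤ f j + 1) →
    ∃ j, a ≤ j ∧ j ≤ b ∧ f j = k := by
  intro b
  induction b with
  | zero =>
    intro a hab h1 h2 _
    obtain rfl : a = 0 := by omega
    exact ⟨0, le_refl _, le_refl _, by omega⟩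
  | succ b ih =>
    intro a hab h1 h2 hstep
    by_cases hab' : a = b + 1
    · subst hab'
      exact ⟨b + 1, le_refl _, le_refl _, by omega⟩
    · have hab2 : a ≤ b := by omega
      rcases le_or_gt k (f b) with hk | hk
      · obtain ⟨j, hj1, hj2, hj3⟩ := ih a hab2 h1 hk (fun j hj1 hj2 => hstep j hj1 (by omega))
        exact ⟨j, hj1, by omega, hj3⟩
      · have := hstep b hab2 (by omega)
        exact ⟨b + 1, by omega, le_refl _, by omega⟩

/-- If the bowtie graph of a linear `r`-graph `𝒢` contains a path on `p ≥ k²`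
vertices, then `𝒢` contains `k` hyperedges spanning at most `(r-2)k + 3` vertices. -/
theorem stmt_15 {V : Type*} [DecidableEq V] (r k p : ℕ) (hr : 3 ≤ r)
    (𝒢 : Finset (Finset V)) (hlin : Linear 𝒢) (hunif : Uniform r 𝒢)
    (hp : k ^ 2 ≤ p)
    (hpath : ∃ (a b : {b : Finset (Finset V) // IsBowtie 𝒢 b})
      (w : (bowtieGraph 𝒢).Walk a b), w.IsPath ∧ w.length + 1 = p) :
    ∃ 𝒦 : Finset (Finset V), 𝒦 ⊆ 𝒢 ∧ 𝒦.card = k ∧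
      (𝒦.sup id).card ≤ (r - 2) * k + 3 := by
  obtain ⟨a, b₀, w, hw, hlen⟩ := hpath
  -- trivial cases k = 0, k = 1
  rcases Nat.lt_or_ge k 2 with hk2 | hk2
  · interval_cases k
    · exact ⟨∅, by simp, by simp, by simp⟩
    · obtain ⟨S, T, hS, -, -, -, -⟩ := a.2
      refine ⟨{S}, by simpa using hS, Finset.card_singleton S, ?_⟩
      simp only [Finset.sup_singleton, id_eq]
      have := hunif S hS
      omega
  -- the list of bowties along the path
  set L : List (Finset (Finset V)) := w.support.map Subtype.val with hLdef
  have hLlen : L.length = p := by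
    rw [hLdef, List.length_map, SimpleGraph.Walk.length_support, hlen]
  have hLnodup : L.Nodup := hw.support_nodup.map Subtype.val_injective
  have hLbow : ∀ c ∈ L, IsBowtie 𝒢 c := by
    intro c hc
    rw [hLdef, List.mem_map] at hc
    obtain ⟨x, -, rfl⟩ := hc
    exact x.2
  have hp1 : 1 ≤ p := by omega
  have hp4 : 4 ≤ p := by nlinarith
  -- the union of the first j bowties
  set U : ℕ → Finset (Finset V) := fun j => ((L.take j).toFinset).sup id with hUdef
  have hmemU : ∀ (X : Finset V) (j : ℕ), X ∈ U j ↔ ∃ c ∈ L.take j, X ∈ c := by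
    intro X j
    simp [hUdef, Finset.mem_sup]
  have hUsub : ∀ j, U j ⊆ 𝒢 := by
    intro j X hX
    obtain ⟨c, hc, hXc⟩ := (hmemU X j).mp hX
    exact bowtie_mem (hLbow c (List.take_subset j L hc)) hXc
  have hUmono : ∀ i j : ℕ, i ≤ j → U i ⊆ U j := by
    intro i j hij X hX
    obtain ⟨c, hc, hXc⟩ := (hmemU X i).mp hX
    refine (hmemU X j).mpr ⟨c, ?_, hXc⟩
    have : L.take i = (L.take j).take i := by
      rw [List.take_take, min_eq_left hij]
    rw [this] at hc
    exact List.take_subset i (L.take j) hc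
  have hstepU : ∀ j (hj : j < p), U (j + 1) = U j ∪ L[j]'(by omega) := by
    intro j hj
    have hjL : j < L.length := by omega
    rw [hUdef]
    simp only
    rw [List.take_succ, List.getElem?_eq_getElem hjL, Option.toList_some,
      List.toFinset_append, Finset.sup_union]
    simp
  have hsubU : ∀ j (hj : j < p), (L[j]'(by omega) : Finset (Finset V)) ⊆ U (j + 1) := by
    intro j hj
    rw [hstepU j hj]
    exact Finset.subset_union_right
  -- consecutive bowties are adjacent
  have hadj : ∀ j (hj : j + 1 < p), ∃ S₁ S₂ T : Finset V,
      L[j]'(by omega) = {S₁, T} ∧ L[j+1]'(by omega) = {S₂, T} ∧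
      (S₁ ∩ S₂).card = 1 ∧ S₁ ∩ S₂ ∩ T = ∅ := by
    intro j hj
    have hchainL : List.IsChain (fun c d : Finset (Finset V) => ∃ S₁ S₂ T : Finset V,
        c = {S₁, T} ∧ d = {S₂, T} ∧ (S₁ ∩ S₂).card = 1 ∧ S₁ ∩ S₂ ∩ T = ∅) L := by
      rw [hLdef, List.isChain_map]
      exact w.isChain_adj_support.imp (fun a b h => h.2)
    rw [List.isChain_iff_getElem] at hchainL
    have := hchainL j (by omega)
    exact this
  -- the key step lemma
  have hkey : ∀ j, 1 ≤ j → j < p →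
      U (j + 1) = U j ∨ ∃ E : Finset V, E ∉ U j ∧ U (j + 1) = insert E (U j) ∧
        (E \ (U j).sup id).card ≤ r - 2 := by
    rintro j hj1 hjp
    obtain ⟨i, rfl⟩ : ∃ i, j = i + 1 := ⟨j - 1, by omega⟩
    obtain ⟨S₁, S₂, T, h1, h2, hcap, hdisj⟩ := hadj i hjp
    have hbi : IsBowtie 𝒢 (L[i]'(by omega)) := hLbow _ (List.getElem_mem _)
    have hbi1 : IsBowtie 𝒢 (L[i+1]'(by omega)) := hLbow _ (List.getElem_mem _)
    have hS1mem : S₁ ∈ U (i + 1) := hsubU i (by omega) (h1 ▸ Finset.mem_insert_self _ _)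
    have hTmem : T ∈ U (i + 1) := hsubU i (by omega)
      (h1 ▸ Finset.mem_insert_of_mem (Finset.mem_singleton_self T))
    have hU2 : U (i + 2) = insert S₂ (U (i + 1)) := by
      rw [hstepU (i + 1) hjp, h2]
      ext X
      simp only [Finset.mem_union, Finset.mem_insert, Finset.mem_singleton]
      constructor
      · rintro (h | rfl | rfl)
        · exact Or.inr h
        · exact Or.inl rfl
        · exact Or.inr hTmem
      · rintro (rfl | h)
        · exact Or.inr (Or.inl rfl)
        · exact Or.inl h
    by_cases hS2 : S₂ ∈ U (i + 1)
    · left; rw [hU2, Finset.insert_eq_self.mpr hS2]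
    · right
      refine ⟨S₂, hS2, hU2, ?_⟩
      -- S₁ ≠ T
      have hS1T : S₁ ≠ T := by
        intro h
        have := bowtie_card hbi
        rw [h1, h] at this
        simp at this
      have hS1Tcap : (S₁ ∩ T).card = 1 := bowtie_pair hbi
        (h1 ▸ Finset.mem_insert_self _ _)
        (h1 ▸ Finset.mem_insert_of_mem (Finset.mem_singleton_self T)) hS1T
      have hS2T : S₂ ≠ T := by
        rintro rfl
        have : S₁ ∩ S₂ ∩ S₂ = S₁ ∩ S₂ := by
          rw [Finset.inter_assoc, Finset.inter_self]
        rw [this] at hdisj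
        rw [hdisj] at hcap
        simp at hcap
      have hS2Tcap : (S₂ ∩ T).card = 1 := bowtie_pair hbi1
        (h2 ▸ Finset.mem_insert_self _ _)
        (h2 ▸ Finset.mem_insert_of_mem (Finset.mem_singleton_self T)) hS2T
      obtain ⟨x, hx⟩ := Finset.card_eq_one.mp hcap
      obtain ⟨y, hy⟩ := Finset.card_eq_one.mp hS2Tcap
      have hxS1 : x ∈ S₁ := (Finset.mem_inter.mp (hx ▸ Finset.mem_singleton_self x)).1
      have hxS2 : x ∈ S₂ := (Finset.mem_inter.mp (hx ▸ Finset.mem_singleton_self x)).2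
      have hyS2 : y ∈ S₂ := (Finset.mem_inter.mp (hy ▸ Finset.mem_singleton_self y)).1
      have hyT : y ∈ T := (Finset.mem_inter.mp (hy ▸ Finset.mem_singleton_self y)).2
      have hxy : x ≠ y := by
        rintro rfl
        have : x ∈ S₁ ∩ S₂ ∩ T := by
          simp [Finset.mem_inter, hxS1, hxS2, hyT]
        rw [hdisj] at this
        simp at this
      set W := (U (i + 1)).sup id with hWdef
      have hxW : x ∈ W := Finset.mem_sup.mpr ⟨S₁, hS1mem, hxS1⟩
      have hyW : y ∈ W := Finset.mem_sup.mpr ⟨T, hTmem, hyT⟩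
      have hsub2 : ({x, y} : Finset V) ⊆ S₂ ∩ W := by
        intro z hz
        rcases Finset.mem_insert.mp hz with rfl | hz'
        · exact Finset.mem_inter.mpr ⟨hxS2, hxW⟩
        · rw [Finset.mem_singleton] at hz'; subst hz'
          exact Finset.mem_inter.mpr ⟨hyS2, hyW⟩
      have h2le : 2 ≤ (S₂ ∩ W).card := by
        calc 2 = ({x, y} : Finset V).card := (Finset.card_pair hxy).symm
        _ ≤ (S₂ ∩ W).card := Finset.card_le_card hsub2
      have hcardS2 : S₂.card = r := hunif S₂ (bowtie_mem hbi1 (h2 ▸ Finset.mem_insert_self _ _))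
      have := Finset.card_sdiff_add_card_inter S₂ W
      omega
  -- U 1 is the first bowtie
  have hU1 : U 1 = L[0]'(by omega) := by
    rw [hUdef]
    simp only
    rw [List.take_succ, List.getElem?_eq_getElem (by omega), Option.toList_some]
    simp
  obtain ⟨P, Q, hP, hQ, hPQ, hPQcap, hb0⟩ := hLbow _ (List.getElem_mem (by omega : 0 < L.length))
  have hbow0 : IsBowtie 𝒢 {P, Q} := ⟨P, Q, hP, hQ, hPQ, hPQcap, rfl⟩
  have hU1' : U 1 = {P, Q} := by rw [hU1, hb0]
  have hU1card : (U 1).card = 2 := by rw [hU1']; exact bowtie_card hbow0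
  have hU1sup : ((U 1).sup id).card ≤ (r - 2) * (U 1).card + 3 := by
    rw [hU1']
    have h2 : ({P, Q} : Finset (Finset V)).card = 2 := bowtie_card hbow0
    rw [h2, Finset.sup_insert, Finset.sup_singleton]
    simp only [id_eq, Finset.sup_eq_union]
    have hcP : P.card = r := hunif P hP
    have hcQ : Q.card = r := hunif Q hQ
    have := Finset.card_union_add_card_inter P Q
    omega
  -- invariant: span bound
  have hinv : ∀ j, 1 ≤ j → j ≤ p → ((U j).sup id).card ≤ (r - 2) * (U j).card + 3 := by
    intro j
    induction j with
    | zero => omega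
    | succ j ih =>
      intro h1 h2
      rcases Nat.eq_or_lt_of_le h1 with h1' | h1'
      · obtain rfl : j = 0 := by omega
        exact hU1sup
      · have hjp : j < p := by omega
        rcases hkey j (by omega) hjp with heq | ⟨E, hE, hEins, hEcard⟩
        · rw [heq]; exact ih (by omega) (by omega)
        · have ihj := ih (by omega) (by omega)
          rw [hEins, Finset.sup_insert, Finset.card_insert_of_notMem hE]
          simp only [id_eq, Finset.sup_eq_union]
          have := Finset.card_sdiff_add_card E ((U j).sup id)
          have hmul : (r - 2) * ((U j).card + 1) = (r - 2) * (U j).card + (r - 2) := by ring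
          omega
  -- counting: U p has at least k hyperedges
  have hkcard : k ≤ (U p).card := by
    have hsubpow : L.toFinset ⊆ (U p).powersetCard 2 := by
      intro c hc
      rw [List.mem_toFinset] at hc
      rw [Finset.mem_powersetCard]
      constructor
      · intro X hX
        refine (hmemU X p).mpr ⟨c, ?_, hX⟩
        rwa [← hLlen, List.take_length]
      · exact bowtie_card (hLbow c hc)
    have hple : p ≤ ((U p).card).choose 2 := by
      calc p = L.toFinset.card := by rw [List.toFinset_card_of_nodup hLnodup, hLlen]
      _ ≤ ((U p).powersetCard 2).card := Finset.card_le_card hsubpow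
      _ = ((U p).card).choose 2 := Finset.card_powersetCard 2 (U p)
    have hchoose : ((U p).card).choose 2 ≤ (U p).card ^ 2 := by
      rw [Nat.choose_two_right]
      set n := (U p).card
      calc n * (n - 1) / 2 ≤ n * (n - 1) := Nat.div_le_self _ _
      _ ≤ n * n := Nat.mul_le_mul_left n (by omega)
      _ = n ^ 2 := (sq n).symm
    have : k ^ 2 ≤ (U p).card ^ 2 := by omega
    exact (Nat.pow_le_pow_iff_left (by norm_num : 2 ≠ 0)).mp this
  -- discrete intermediate value
  obtain ⟨j, hj1, hjp, hjcard⟩ := nat_ivt (fun j => (U j).card) k p 1 hp1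
    (by show (U 1).card ≤ k; omega) (by exact hkcard)
    (by
      intro j h1 h2
      show (U (j + 1)).card ≤ (U j).card + 1
      rcases hkey j h1 h2 with heq | ⟨E, hE, hEins, -⟩
      · rw [heq]; omega
      · rw [hEins, Finset.card_insert_of_notMem hE])
  exact ⟨U j, hUsub j, hjcard, hjcard ▸ hinv j hj1 hjp⟩
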